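/- Let y∞ be an infinite sequence over {0,…,k−1}, let y_m be its prefix of length m, and define φ(x) = k^{j(x)} − 1 where j(x) is the length of the longest common prefix of x and y∞. Then φ is the unique (up to nonnegative multiple) nonnegative function on the k-ary tree vanishing at ∅, harmonic at every vertex ≠ ∅ for the tree random walk, that is bounded above by φ itself; i.e. φ is minimal: any nonnegative ψ with ψ(∅)=0, harmonic off ∅, and ψ ≤ φ pointwise satisfies ψ = cφ for some c ∈ [0,1]. -/

import Mathlib

/-- Length of the longest common prefix of two lists. -/
def commonLen {α : Type*} [DecidableEq α] : List α → List α → ℕ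
  | a :: as, b :: bs => if a = b then commonLen as bs + 1 else 0
  | _, _ => 0

/-- `ψ` is harmonic at the nonempty vertex `x` for the `k`-ary tree random walk. -/
def treeHarmAt (k : ℕ) (ψ : List (Fin k) → ℝ) (x : List (Fin k)) : Prop :=
  ψ x = (1 / 2) * ψ x.dropLast + ∑ j : Fin k, (1 / (2 * (k : ℝ))) * ψ (x ++ [j])

/-- Length of the longest common prefix of a finite sequence `x` with the infinite ray
`y∞`. -/
def rayLen {k : ℕ} (yinf : ℕ → Fin k) (x : List (Fin k)) : ℕ :=
  commonLen x (List.ofFn fun i : Fin x.length => yinf i)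

section CL
variable {α : Type*} [DecidableEq α]

@[simp] lemma commonLen_nil_left (bs : List α) : commonLen [] bs = 0 := by
  cases bs <;> rfl

@[simp] lemma commonLen_cons (a b : α) (as bs : List α) :
    commonLen (a :: as) (b :: bs) = if a = b then commonLen as bs + 1 else 0 := rfl

lemma commonLen_self (l : List α) : commonLen l l = l.length := by
  induction l with
  | nil => rfl
  | cons a as ih => simp [ih]

lemma commonLen_le (as : List α) : ∀ bs : List α, commonLen as bs ≤ as.length := by
  induction as with
  | nil => intro bs; simp
  | cons a as ih =>
    intro bs
    cases bs with
    | nil => simp [commonLen]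
    | cons b bs =>
      simp only [commonLen_cons, List.length_cons]
      split
      · exact Nat.succ_le_succ (ih bs)
      · omega

lemma commonLen_full : ∀ as bs : List α, commonLen as bs = as.length →
    as.length = bs.length → as = bs
  | [], [], _, _ => rfl
  | [], _ :: _, _, h => by simp at h
  | _ :: _, [], _, h => by simp at h
  | a :: as, b :: bs, h1, h2 => by
    simp only [commonLen_cons, List.length_cons] at h1 h2
    by_cases hab : a = b
    · subst hab
      rw [if_pos rfl] at h1
      have := commonLen_full as bs (by omega) (by omega)
      simp [this]
    · simp [hab] at h1

lemma commonLen_snoc : ∀ as bs : List α, ∀ a b : α, as.length = bs.length →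
    commonLen (as ++ [a]) (bs ++ [b]) =
      if commonLen as bs = as.length ∧ a = b then as.length + 1 else commonLen as bs
  | [], [], a, b, _ => by
    by_cases hab : a = b <;> simp [commonLen, hab]
  | [], _ :: _, _, _, h => by simp at h
  | _ :: _, [], _, _, h => by simp at h
  | x :: as, y :: bs, a, b, h => by
    simp only [List.length_cons] at h
    by_cases hxy : x = y
    · subst hxy
      have := commonLen_snoc as bs a b (by omega)
      simp only [List.cons_append, commonLen_cons, if_pos rfl, this, List.length_cons, eq_self_iff_true, if_true]
      by_cases hc : commonLen as bs = as.length ∧ a = b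
      · simp [hc]
      · have hc' : ¬ (commonLen as bs + 1 = as.length + 1 ∧ a = b) := by
          intro ⟨h1, h2⟩; exact hc ⟨by omega, h2⟩
        rw [if_neg hc, if_neg hc']
    · have hle1 := commonLen_le (x :: as ++ [a]) (y :: bs ++ [b])
      simp only [List.cons_append, commonLen_cons, if_neg hxy, List.length_cons]
      have : ¬ ((0:ℕ) = as.length + 1 ∧ a = b) := by omega
      rw [if_neg this]

lemma commonLen_decomp : ∀ as bs : List α, (h : commonLen as bs < as.length) →
    as.length = bs.length →
    ∃ c ts, as = bs.take (commonLen as bs) ++ c :: ts ∧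
      ∀ (hb : commonLen as bs < bs.length), c ≠ bs[commonLen as bs]
  | [], bs, h, _ => by simp at h
  | _ :: _, [], _, h => by simp at h
  | a :: as, b :: bs, h, hlen => by
    simp only [List.length_cons] at hlen
    by_cases hab : a = b
    · subst hab
      simp only [commonLen_cons, if_pos rfl, eq_self_iff_true, if_true] at h ⊢
      simp only [List.length_cons] at h
      obtain ⟨c, ts, heq, hne⟩ := commonLen_decomp as bs (by omega) (by omega)
      refine ⟨c, ts, ?_, ?_⟩
      · simp only [List.take_succ_cons, List.cons_append]
        rw [← heq]
      · intro hb
        simp only [List.length_cons] at hb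
        have := hne (by omega)
        simpa using this
    · refine ⟨a, as, ?_, ?_⟩
      · simp [commonLen_cons, hab]
      · intro hb
        simp [commonLen_cons, hab]

end CL

section Ray
variable {k : ℕ} (yinf : ℕ → Fin k)

/-- Prefix of the ray of length `n`. -/
def rayPre (n : ℕ) : List (Fin k) := List.ofFn fun i : Fin n => yinf i

@[simp] lemma rayPre_length (n : ℕ) : (rayPre yinf n).length = n := by
  simp [rayPre]

lemma rayLen_eq (x : List (Fin k)) :
    rayLen yinf x = commonLen x (rayPre yinf x.length) := rfl

lemma rayPre_succ (n : ℕ) : rayPre yinf (n + 1) = rayPre yinf n ++ [yinf n] := by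
  rw [rayPre, List.ofFn_succ', List.concat_eq_append, rayPre]
  simp

lemma rayPre_zero : rayPre yinf 0 = [] := rfl

lemma rayLen_rayPre (m : ℕ) : rayLen yinf (rayPre yinf m) = m := by
  rw [rayLen_eq, rayPre_length, commonLen_self, rayPre_length]

lemma rayLen_le (x : List (Fin k)) : rayLen yinf x ≤ x.length := by
  rw [rayLen_eq]; exact commonLen_le _ _

lemma rayLen_full {x : List (Fin k)} (h : rayLen yinf x = x.length) :
    x = rayPre yinf x.length := by
  rw [rayLen_eq] at h
  exact commonLen_full _ _ h (by simp)

lemma rayLen_snoc (x : List (Fin k)) (j : Fin k) :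
    rayLen yinf (x ++ [j]) =
      if rayLen yinf x = x.length ∧ j = yinf x.length then x.length + 1
      else rayLen yinf x := by
  have h1 : rayLen yinf (x ++ [j])
      = commonLen (x ++ [j]) (rayPre yinf (x.length + 1)) := by
    rw [rayLen_eq]; congr 1; simp
  rw [h1, rayPre_succ, commonLen_snoc x _ j _ (by simp), rayLen_eq]

lemma rayLen_stable {z : List (Fin k)} (hz : rayLen yinf z < z.length) :
    ∀ t, rayLen yinf (z ++ t) = rayLen yinf z := by
  intro t
  induction t using List.reverseRecOn with
  | nil => simp
  | append_singleton t e ih =>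
    rw [← List.append_assoc, rayLen_snoc]
    have hle : rayLen yinf z ≤ z.length + t.length := by
      have := rayLen_le yinf z; omega
    have : ¬ (rayLen yinf (z ++ t) = (z ++ t).length ∧ e = yinf (z ++ t).length) := by
      rintro ⟨h1, -⟩
      rw [ih] at h1
      simp only [List.length_append] at h1
      omega
    rw [if_neg this, ih]

lemma rayPre_split (m n : ℕ) :
    rayPre yinf (m + n) = rayPre yinf m ++ List.ofFn (fun i : Fin n => yinf (m + i)) := by
  induction n with
  | zero => simp
  | succ n ih =>
    have : m + (n + 1) = (m + n) + 1 := by omega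
    rw [this, rayPre_succ, ih, List.ofFn_succ']
    simp [List.concat_eq_append, List.append_assoc]

lemma rayPre_take {m n : ℕ} (h : m ≤ n) :
    (rayPre yinf n).take m = rayPre yinf m := by
  obtain ⟨p, rfl⟩ := Nat.exists_eq_add_of_le h
  rw [rayPre_split]
  rw [List.take_left' (by simp)]

lemma rayLen_decomp {x : List (Fin k)} (h : rayLen yinf x < x.length) :
    ∃ (c : Fin k) (ts : List (Fin k)),
      x = rayPre yinf (rayLen yinf x) ++ c :: ts ∧ c ≠ yinf (rayLen yinf x) := by
  have hlen : x.length = (rayPre yinf x.length).length := by simp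
  obtain ⟨c, ts, heq, hne⟩ := commonLen_decomp x (rayPre yinf x.length)
    (by rw [← rayLen_eq]; exact h) hlen
  rw [← rayLen_eq] at heq
  rw [rayPre_take yinf (le_of_lt h)] at heq
  have hb : commonLen x (rayPre yinf x.length) < (rayPre yinf x.length).length := by
    rw [← rayLen_eq]; simpa using h
  have hcne := hne hb
  simp only [rayPre, List.getElem_ofFn] at hcne
  exact ⟨c, ts, heq, hcne⟩

end Ray

/-- A real sequence that is "convex" (`2 S(d+1) ≤ S d + S(d+2)`) and bounded above is
nonincreasing. -/
lemma convex_bounded_antitone (S : ℕ → ℝ) (M : ℝ)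
    (hconv : ∀ d, 2 * S (d + 1) ≤ S d + S (d + 2))
    (hbd : ∀ d, S d ≤ M) : ∀ d, S (d + 1) ≤ S d := by
  intro d
  by_contra hlt
  push_neg at hlt
  set δ := S (d + 1) - S d with hδ
  have hδpos : 0 < δ := by simp [hδ]; linarith
  have hstep : ∀ n, δ ≤ S (d + n + 1) - S (d + n) := by
    intro n
    induction n with
    | zero => simp [hδ]
    | succ n ih =>
      have := hconv (d + n)
      have : S (d + n + 1) - S (d + n) ≤ S (d + n + 2) - S (d + n + 1) := by linarith
      have h2 : d + (n + 1) + 1 = d + n + 2 := by omega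
      have h3 : d + (n + 1) = d + n + 1 := by omega
      rw [h2, h3]
      linarith
  have hsum : ∀ n, S d + n * δ ≤ S (d + n) := by
    intro n
    induction n with
    | zero => simp
    | succ n ih =>
      have := hstep n
      push_cast
      have h3 : d + (n + 1) = d + n + 1 := by omega
      rw [h3]
      push_cast at ih
      linarith
  obtain ⟨n, hn⟩ := exists_nat_gt ((M - S d) / δ)
  have := hsum n
  have hb := hbd (d + n)
  have : (M - S d) / δ < n := hn
  have : M - S d < n * δ := by
    rw [div_lt_iff₀ hδpos] at hn
    linarith
  linarith

lemma S_le_S_zero (S : ℕ → ℝ) (M : ℝ)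
    (hconv : ∀ d, 2 * S (d + 1) ≤ S d + S (d + 2))
    (hbd : ∀ d, S d ≤ M) : ∀ d, S d ≤ S 0 := by
  intro d
  induction d with
  | zero => exact le_refl _
  | succ n ih => exact le_trans (convex_bounded_antitone S M hconv hbd n) ih

section Key
variable {k : ℕ}

lemma harm_neg (hk : 2 ≤ k) (ψ : List (Fin k) → ℝ)
    (harm : ∀ x, x ≠ [] → treeHarmAt k ψ x) :
    ∀ x, x ≠ [] → treeHarmAt k (fun y => -ψ y) x := by
  intro x hx
  have h := harm x hx
  rw [treeHarmAt] at h ⊢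
  simp only [mul_neg, Finset.sum_neg_distrib]
  linarith

/-- One-sided comparison: on the subtree rooted at `z`, a harmonic function bounded
above is bounded by its value at the father of `z`. -/
lemma subtree_le (hk : 2 ≤ k) (ψ : List (Fin k) → ℝ)
    (harm : ∀ x, x ≠ [] → treeHarmAt k ψ x)
    (z : List (Fin k)) (hz : z ≠ []) (B : ℝ)
    (hB : ∀ t, ψ (z ++ t) ≤ B) (hpB : ψ z.dropLast ≤ B) :
    ∀ t, ψ (z ++ t) ≤ ψ z.dropLast := by
  have hkk : 0 < k := by omega
  have hk0 : (0:ℝ) < (k:ℝ) := by exact_mod_cast hkk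
  haveI : Nonempty (Fin k) := ⟨⟨0, hkk⟩⟩
  let S : ℕ → ℝ := fun d =>
    match d with
    | 0 => ψ z.dropLast
    | Nat.succ e =>
      (Finset.univ : Finset (Fin e → Fin k)).sup' Finset.univ_nonempty
        (fun f => ψ (z ++ List.ofFn f))
  have hS0 : S 0 = ψ z.dropLast := rfl
  have hSsucc : ∀ e, S (e + 1) =
      (Finset.univ : Finset (Fin e → Fin k)).sup' Finset.univ_nonempty
        (fun f => ψ (z ++ List.ofFn f)) := fun e => rfl
  have hmem : ∀ t : List (Fin k), ψ (z ++ t) ≤ S (t.length + 1) := by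
    intro t
    rw [hSsucc t.length]
    have h2 := Finset.le_sup' (fun f : Fin t.length → Fin k => ψ (z ++ List.ofFn f))
      (Finset.mem_univ t.get)
    simpa only [List.ofFn_get] using h2
  have hub : ∀ d, S d ≤ B := by
    intro d
    cases d with
    | zero => exact hpB
    | succ e =>
      rw [hSsucc e]
      exact Finset.sup'_le _ _ fun f _ => hB _
  have hpar : ∀ t : List (Fin k), ψ ((z ++ t).dropLast) ≤ S t.length := by
    intro t
    rcases List.eq_nil_or_concat t with rfl | ⟨t', e, rfl⟩
    · rw [List.append_nil]
      exact le_of_eq hS0.symm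
    · rw [List.concat_eq_append, ← List.append_assoc, List.dropLast_concat]
      have := hmem t'
      simpa using this
  have hconv : ∀ d, 2 * S (d + 1) ≤ S d + S (d + 2) := by
    intro d
    obtain ⟨f₀, -, hf₀⟩ := Finset.exists_mem_eq_sup'
      (Finset.univ_nonempty : (Finset.univ : Finset (Fin d → Fin k)).Nonempty)
      (fun f => ψ (z ++ List.ofFn f))
    have hlen : (List.ofFn f₀).length = d := by simp
    have hzt : z ++ List.ofFn f₀ ≠ [] := by
      simp [hz]
    have hh := harm _ hzt
    rw [treeHarmAt] at hh
    have hpar' : ψ ((z ++ List.ofFn f₀).dropLast) ≤ S d := by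
      have := hpar (List.ofFn f₀)
      rwa [hlen] at this
    have hch : ∀ j : Fin k, ψ ((z ++ List.ofFn f₀) ++ [j]) ≤ S (d + 2) := by
      intro j
      rw [List.append_assoc]
      have := hmem (List.ofFn f₀ ++ [j])
      simpa [hlen] using this
    have hsum : ∑ j : Fin k, (1 / (2 * (k:ℝ))) * ψ ((z ++ List.ofFn f₀) ++ [j])
        ≤ (1 / 2) * S (d + 2) := by
      have h1 : ∑ j : Fin k, (1 / (2 * (k:ℝ))) * ψ ((z ++ List.ofFn f₀) ++ [j])
          ≤ ∑ _j : Fin k, (1 / (2 * (k:ℝ))) * S (d + 2) := by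
        apply Finset.sum_le_sum
        intro j _
        have hnn : (0:ℝ) ≤ 1 / (2 * (k:ℝ)) := by positivity
        exact mul_le_mul_of_nonneg_left (hch j) hnn
      have h2 : ∑ _j : Fin k, (1 / (2 * (k:ℝ))) * S (d + 2)
          = (1 / 2) * S (d + 2) := by
        rw [Finset.sum_const, Finset.card_univ, Fintype.card_fin, nsmul_eq_mul]
        field_simp
      linarith
    have hS1 : S (d + 1) = ψ (z ++ List.ofFn f₀) := by rw [hSsucc d]; exact hf₀
    rw [hS1]
    linarith
  intro t
  calc ψ (z ++ t) ≤ S (t.length + 1) := hmem t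
    _ ≤ S 0 := S_le_S_zero S B hconv hub (t.length + 1)
    _ = ψ z.dropLast := hS0

end Key

section Key2
variable {k : ℕ}

lemma subtree_const (hk : 2 ≤ k) (ψ : List (Fin k) → ℝ)
    (h0 : ∀ x, 0 ≤ ψ x)
    (harm : ∀ x, x ≠ [] → treeHarmAt k ψ x)
    (z : List (Fin k)) (hz : z ≠ []) (M : ℝ)
    (hM : ∀ t, ψ (z ++ t) ≤ M) (hpM : ψ z.dropLast ≤ M) :
    ∀ t, ψ (z ++ t) = ψ z.dropLast := by
  intro t
  have hle := subtree_le hk ψ harm z hz M hM hpM t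
  have hneg := subtree_le hk (fun y => -ψ y) (harm_neg hk ψ harm) z hz 0
    (fun s => by simpa using h0 (z ++ s)) (by simpa using h0 z.dropLast) t
  simp only [neg_le_neg_iff] at hneg
  linarith

lemma phi_harm (hk : 2 ≤ k) (yinf : ℕ → Fin k) :
    ∀ x : List (Fin k), x ≠ [] →
      treeHarmAt k (fun x => ((k : ℝ) ^ rayLen yinf x - 1)) x := by
  intro x hx
  have hk0 : (0:ℝ) < (k:ℝ) := by
    have : 0 < k := by omega
    exact_mod_cast this
  have hkne : (k:ℝ) ≠ 0 := ne_of_gt hk0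
  rw [treeHarmAt]
  rcases lt_or_eq_of_le (rayLen_le yinf x) with hlt | heq
  · -- off the ray
    obtain ⟨c, ts, hdec, hcne⟩ := rayLen_decomp yinf hlt
    set r := rayLen yinf x with hr
    have hx2 : x = (rayPre yinf r ++ [c]) ++ ts := by
      rw [hdec]; simp
    have hzray : rayLen yinf (rayPre yinf r ++ [c]) = r := by
      rw [rayLen_snoc, rayLen_rayPre, rayPre_length]
      rw [if_neg (by simp [hcne] : ¬(r = r ∧ c = yinf r))]
    have hzlt : rayLen yinf (rayPre yinf r ++ [c]) < (rayPre yinf r ++ [c]).length := by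
      rw [hzray]; simp
    have hstab : ∀ t, rayLen yinf ((rayPre yinf r ++ [c]) ++ t) = r := by
      intro t; rw [rayLen_stable yinf hzlt t, hzray]
    have hchild : ∀ j : Fin k, rayLen yinf (x ++ [j]) = r := by
      intro j
      rw [hx2, List.append_assoc]
      exact hstab (ts ++ [j])
    have hdl : rayLen yinf x.dropLast = r := by
      rcases List.eq_nil_or_concat ts with rfl | ⟨ts', e, rfl⟩
      · rw [hx2]
        simp only [List.append_nil, List.dropLast_concat]
        exact rayLen_rayPre yinf r
      · rw [hx2, List.concat_eq_append, ← List.append_assoc, List.dropLast_concat]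
        exact hstab ts'
    rw [hdl]
    have hsum : ∑ j : Fin k, (1 / (2 * (k:ℝ))) * ((k:ℝ) ^ rayLen yinf (x ++ [j]) - 1)
        = ∑ _j : Fin k, (1 / (2 * (k:ℝ))) * ((k:ℝ) ^ r - 1) :=
      Finset.sum_congr rfl fun j _ => by rw [hchild j]
    rw [hsum, Finset.sum_const, Finset.card_univ, Fintype.card_fin, nsmul_eq_mul]
    field_simp
    ring
  · -- on the ray
    have hxeq : x = rayPre yinf x.length := rayLen_full yinf heq
    obtain ⟨m, hm⟩ : ∃ m, x.length = m + 1 := by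
      cases x with
      | nil => exact absurd rfl hx
      | cons a as => exact ⟨as.length, rfl⟩
    rw [hm] at hxeq
    have hdl : x.dropLast = rayPre yinf m := by
      rw [hxeq, rayPre_succ]; exact List.dropLast_concat
    have hchild : ∀ j : Fin k, rayLen yinf (x ++ [j]) =
        if j = yinf (m + 1) then m + 2 else m + 1 := by
      intro j
      rw [hxeq, rayLen_snoc, rayLen_rayPre, rayPre_length]
      by_cases hj : j = yinf (m + 1)
      · rw [if_pos ⟨rfl, hj⟩, if_pos hj]
      · rw [if_neg (by simp [hj]), if_neg hj]
    have hray : rayLen yinf x = m + 1 := by rw [heq, hm]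
    rw [hray, hdl, rayLen_rayPre]
    have hsummand : ∀ j : Fin k, (1 / (2 * (k:ℝ))) * ((k:ℝ) ^ rayLen yinf (x ++ [j]) - 1)
        = (1 / (2 * (k:ℝ))) * ((k:ℝ) ^ (m + 1) - 1) +
          (if j = yinf (m + 1) then
            (1 / (2 * (k:ℝ))) * ((k:ℝ) ^ (m + 2) - (k:ℝ) ^ (m + 1)) else 0) := by
      intro j
      rw [hchild j]
      by_cases hj : j = yinf (m + 1)
      · rw [if_pos hj, if_pos hj]; ring
      · rw [if_neg hj, if_neg hj]; ring
    rw [Finset.sum_congr rfl fun j _ => hsummand j, Finset.sum_add_distrib,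
      Finset.sum_const, Finset.card_univ, Fintype.card_fin, nsmul_eq_mul,
      Finset.sum_ite_eq']
    simp only [Finset.mem_univ, if_true]
    field_simp
    ring

end Key2

/-- Let `y∞` be an infinite ray in the `k`-ary tree and `φ(x) = k^{j(x)} − 1`, where
`j(x)` is the length of the longest common prefix of `x` and `y∞`. Then `φ` vanishes at
the root, is harmonic at every nonempty vertex, and is minimal: any nonnegative `ψ` with
`ψ(∅) = 0`, harmonic off `∅`, and `ψ ≤ φ` pointwise satisfies `ψ = c·φ` for some
`c ∈ [0,1]`. -/
theorem tree_ray_harmonic_minimal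
    (k : ℕ) (hk : 2 ≤ k) (yinf : ℕ → Fin k) :
    ((fun x => ((k : ℝ) ^ rayLen yinf x - 1)) [] = 0) ∧
    (∀ x : List (Fin k), x ≠ [] →
      treeHarmAt k (fun x => ((k : ℝ) ^ rayLen yinf x - 1)) x) ∧
    (∀ ψ : List (Fin k) → ℝ, (∀ x, 0 ≤ ψ x) → ψ [] = 0 →
      (∀ x, x ≠ [] → treeHarmAt k ψ x) →
      (∀ x, ψ x ≤ (k : ℝ) ^ rayLen yinf x - 1) →
      ∃ c ∈ Set.Icc (0 : ℝ) 1, ∀ x, ψ x = c * ((k : ℝ) ^ rayLen yinf x - 1)) := by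
  have hk0 : (0:ℝ) < (k:ℝ) := by
    have : 0 < k := by omega
    exact_mod_cast this
  have hkne : (k:ℝ) ≠ 0 := ne_of_gt hk0
  have hk1 : (1:ℝ) < (k:ℝ) := by
    have : 1 < k := by omega
    exact_mod_cast this
  refine ⟨by norm_num [show rayLen yinf [] = 0 from rfl], phi_harm hk yinf, ?_⟩
  intro ψ h0 hroot harm hle
  -- Step A : constancy on off-ray subtrees
  have hstepA : ∀ (m : ℕ) (i : Fin k), i ≠ yinf m →
      ∀ t, ψ ((rayPre yinf m ++ [i]) ++ t) = ψ (rayPre yinf m) := by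
    intro m i hi t
    have hz : rayPre yinf m ++ [i] ≠ [] := by simp
    have hdl : (rayPre yinf m ++ [i]).dropLast = rayPre yinf m := List.dropLast_concat
    have hzray : rayLen yinf (rayPre yinf m ++ [i]) = m := by
      rw [rayLen_snoc, rayLen_rayPre, rayPre_length]
      rw [if_neg (by simp [hi] : ¬(m = m ∧ i = yinf m))]
    have hzlt : rayLen yinf (rayPre yinf m ++ [i]) < (rayPre yinf m ++ [i]).length := by
      rw [hzray]; simp
    have hM : ∀ s, ψ ((rayPre yinf m ++ [i]) ++ s) ≤ (k:ℝ) ^ m - 1 := by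
      intro s
      have h1 := hle ((rayPre yinf m ++ [i]) ++ s)
      rwa [rayLen_stable yinf hzlt s, hzray] at h1
    have hpM : ψ ((rayPre yinf m ++ [i]).dropLast) ≤ (k:ℝ) ^ m - 1 := by
      rw [hdl]
      have h1 := hle (rayPre yinf m)
      rwa [rayLen_rayPre] at h1
    have h2 := subtree_const hk ψ h0 harm _ hz _ hM hpM t
    rwa [hdl] at h2
  -- Step B : recurrence along the ray
  have hrec : ∀ m, ψ (rayPre yinf (m + 2)) =
      ((k:ℝ) + 1) * ψ (rayPre yinf (m + 1)) - (k:ℝ) * ψ (rayPre yinf m) := by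
    intro m
    have hne : rayPre yinf (m + 1) ≠ [] := by rw [rayPre_succ]; simp
    have hh := harm _ hne
    rw [treeHarmAt] at hh
    have hdl : (rayPre yinf (m + 1)).dropLast = rayPre yinf m := by
      rw [rayPre_succ]; exact List.dropLast_concat
    rw [hdl] at hh
    have hchild : ∀ j : Fin k, ψ (rayPre yinf (m + 1) ++ [j]) =
        if j = yinf (m + 1) then ψ (rayPre yinf (m + 2)) else ψ (rayPre yinf (m + 1)) := by
      intro j
      by_cases hj : j = yinf (m + 1)
      · rw [if_pos hj, hj, ← rayPre_succ]
      · rw [if_neg hj]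
        have h1 := hstepA (m + 1) j hj []
        simpa using h1
    have hlen1 : (rayPre yinf (m + 1)).length = m + 1 := by simp
    have hsummand : ∀ j : Fin k, (1 / (2 * (k:ℝ))) * ψ (rayPre yinf (m + 1) ++ [j])
        = (1 / (2 * (k:ℝ))) * ψ (rayPre yinf (m + 1)) +
          (if j = yinf (m + 1) then
            (1 / (2 * (k:ℝ))) * (ψ (rayPre yinf (m + 2)) - ψ (rayPre yinf (m + 1))) else 0) := by
      intro j
      rw [hchild j]
      by_cases hj : j = yinf (m + 1)
      · rw [if_pos hj, if_pos hj]; ring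
      · rw [if_neg hj, if_neg hj]; ring
    rw [Finset.sum_congr rfl fun j _ => hsummand j, Finset.sum_add_distrib,
      Finset.sum_const, Finset.card_univ, Fintype.card_fin, nsmul_eq_mul,
      Finset.sum_ite_eq'] at hh
    simp only [Finset.mem_univ, if_true] at hh
    field_simp at hh
    linarith
  -- Step C : values along the ray
  set c : ℝ := ψ (rayPre yinf 1) / ((k:ℝ) - 1) with hc
  have hk1ne : (k:ℝ) - 1 ≠ 0 := by linarith
  have ha : ∀ m, ψ (rayPre yinf m) = c * ((k:ℝ) ^ m - 1) := by
    have key : ∀ m, ψ (rayPre yinf m) = c * ((k:ℝ) ^ m - 1) ∧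
        ψ (rayPre yinf (m + 1)) = c * ((k:ℝ) ^ (m + 1) - 1) := by
      intro m
      induction m with
      | zero =>
        constructor
        · rw [rayPre_zero, hroot]; norm_num
        · rw [hc]; field_simp; ring
      | succ n ih =>
        refine ⟨ih.2, ?_⟩
        rw [hrec n, ih.1, ih.2]
        ring
    exact fun m => (key m).1
  -- c ∈ [0, 1]
  have ha1le : ψ (rayPre yinf 1) ≤ (k:ℝ) - 1 := by
    have h1 := hle (rayPre yinf 1)
    rw [rayLen_rayPre] at h1
    simpa using h1
  have hcmem : c ∈ Set.Icc (0:ℝ) 1 := by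
    constructor
    · exact div_nonneg (h0 _) (by linarith)
    · rw [hc, div_le_one (by linarith)]
      linarith
  refine ⟨c, hcmem, ?_⟩
  intro x
  rcases lt_or_eq_of_le (rayLen_le yinf x) with hlt | heq
  · obtain ⟨i, ts, hdec, hine⟩ := rayLen_decomp yinf hlt
    have hx2 : x = (rayPre yinf (rayLen yinf x) ++ [i]) ++ ts := by
      rw [List.append_assoc, List.singleton_append]; exact hdec
    have h1 := hstepA (rayLen yinf x) i hine ts
    calc ψ x = ψ ((rayPre yinf (rayLen yinf x) ++ [i]) ++ ts) := congrArg ψ hx2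
      _ = ψ (rayPre yinf (rayLen yinf x)) := h1
      _ = c * ((k:ℝ) ^ rayLen yinf x - 1) := ha _
  · have hxeq : x = rayPre yinf x.length := rayLen_full yinf heq
    rw [heq]
    conv_lhs => rw [hxeq]
    exact ha x.length
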